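/- The Shapley-Shubik index Φ for (j,k) simple games is efficient: for every (j,k) simple game v with n players, Σ_{i=1}^n Φ_i(v) = 1. -/

import Mathlib

open Finset BigOperators

attribute [local instance] Classical.propDecidable

noncomputable section

variable {n j k : ℕ}

/-- The top element `j-1` of `Fin j`. -/
def topF (j : ℕ) [NeZero j] : Fin j :=
  ⟨j - 1, Nat.sub_lt (Nat.pos_of_ne_zero (NeZero.ne j)) one_pos⟩

/-- The profile equal to the constant `c` on `S` and to `x` off `S`. -/
def mer (S : Finset (Fin n)) (c : Fin j) (x : Fin n → Fin j) : Fin n → Fin j :=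
  fun i => if i ∈ S then c else x i

/-- `(j,k)` simple game: `v 0 = 0`, `v (j-1,…,j-1) = k-1`, monotone. -/
def IsJKGame [NeZero j] [NeZero k] (v : (Fin n → Fin j) → Fin k) : Prop :=
  v (fun _ => 0) = 0 ∧ v (fun _ => topF j) = topF k ∧
    ∀ x y : Fin n → Fin j, (∀ i, x i ≤ y i) → v x ≤ v y

/-- The `(j,k)` simple game with point-veto `a`. -/
def uA [NeZero j] [NeZero k] (a : Fin n → Fin j) (x : Fin n → Fin j) : Fin k :=
  if ∀ i, a i ≤ x i then topF k else 0

/-- The veto game associated with a set `E` of thresholds. -/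
def uE [NeZero j] [NeZero k] (E : Set (Fin n → Fin j)) (x : Fin n → Fin j) : Fin k :=
  if ∃ a ∈ E, ∀ i, a i ≤ x i then topF k else 0

/-- Player `i` is a null player of `v`. -/
def NullPlayer [NeZero j] [NeZero k] (v : (Fin n → Fin j) → Fin k) (i : Fin n) : Prop :=
  ∀ (x : Fin n → Fin j) (y : Fin j), v x = v (Function.update x i y)

/-- Players `i` and `h` are equivalent in `v`. -/
def EquivPlayers [NeZero j] [NeZero k] (v : (Fin n → Fin j) → Fin k) (i h : Fin n) : Prop :=
  ∀ x : Fin n → Fin j, v x = v (x ∘ Equiv.swap i h)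

/-- The average game `ṽ(T) = (1/(jⁿ(k-1))) Σ_x [v((j-1)_T, x_{-T}) - v(0_T, x_{-T})]`. -/
def Cfun [NeZero j] [NeZero k] (v : (Fin n → Fin j) → Fin k) (T : Finset (Fin n)) : ℝ :=
  (1 / ((j : ℝ) ^ n * ((k : ℝ) - 1))) *
    ∑ x : Fin n → Fin j,
      (((v (mer T (topF j) x)).val : ℝ) - ((v (mer T 0 x)).val : ℝ))

/-- The Shapley-Shubik index for `(j,k)` simple games. -/
def Phi [NeZero j] [NeZero k] (v : (Fin n → Fin j) → Fin k) (i : Fin n) : ℝ :=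
  ∑ S ∈ univ.filter (fun S : Finset (Fin n) => i ∈ S),
    ((Nat.factorial (S.card - 1) * Nat.factorial (n - S.card) : ℝ) / (Nat.factorial n : ℝ)) *
      (Cfun v S - Cfun v (S.erase i))

/-- The TU game `v_a(S) = (1/(k-1))[v((j-1)_S, a_{-S}) - v(0_S, a_{-S})]`. -/
def vAgame [NeZero j] [NeZero k] (v : (Fin n → Fin j) → Fin k) (a : Fin n → Fin j)
    (S : Finset (Fin n)) : ℝ :=
  (1 / ((k : ℝ) - 1)) * (((v (mer S (topF j) a)).val : ℝ) - ((v (mer S 0 a)).val : ℝ))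

/-- The parametric power index `Φ^a`. -/
def PhiA [NeZero j] [NeZero k] (v : (Fin n → Fin j) → Fin k) (a : Fin n → Fin j) (i : Fin n) : ℝ :=
  ∑ S ∈ univ.filter (fun S : Finset (Fin n) => i ∈ S),
    ((Nat.factorial (S.card - 1) * Nat.factorial (n - S.card) : ℝ) / (Nat.factorial n : ℝ)) *
      (vAgame v a S - vAgame v a (S.erase i))

/-- The game `w^C`: value `k-1` iff all members of `C` give full support. -/
def wCgame [NeZero j] [NeZero k] (C : Finset (Fin n)) : (Fin n → Fin j) → Fin k :=
  uA (fun i => if i ∈ C then topF j else 0)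

/-- The unanimity TU game `γ_S`. -/
def gammaTU (S T : Finset (Fin n)) : ℝ :=
  if S ⊆ T then 1 else 0

end

noncomputable def wgt (n s : ℕ) : ℝ :=
  (Nat.factorial (s - 1) * Nat.factorial (n - s) : ℝ) / (Nat.factorial n : ℝ)

lemma wgt_key (n s : ℕ) (h1 : 0 < s) (h2 : s < n) :
    (s : ℝ) * wgt n s = ((n - s : ℕ) : ℝ) * wgt n (s + 1) := by
  unfold wgt
  have hs : (s : ℝ) * (Nat.factorial (s - 1) : ℝ) = (Nat.factorial s : ℝ) := by
    rw [← Nat.cast_mul, Nat.mul_factorial_pred h1.ne']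
  have hns : ((n - s : ℕ) : ℝ) * (Nat.factorial (n - s - 1) : ℝ)
      = (Nat.factorial (n - s) : ℝ) := by
    rw [← Nat.cast_mul, Nat.mul_factorial_pred (by omega)]
  have e1 : s + 1 - 1 = s := by omega
  have e2 : n - (s + 1) = n - s - 1 := by omega
  rw [e1, e2, mul_div_assoc', mul_div_assoc']
  congr 1
  nlinarith [hs, hns]

lemma shapley_eff {n : ℕ} (hn : 0 < n) (f : Finset (Fin n) → ℝ) :
    ∑ i : Fin n, ∑ S ∈ univ.filter (fun S : Finset (Fin n) => i ∈ S),
      wgt n S.card * (f S - f (S.erase i)) = f univ - f ∅ := by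
  have hA : ∑ i : Fin n, ∑ S ∈ univ.filter (fun S : Finset (Fin n) => i ∈ S),
      wgt n S.card * f S
      = ∑ S : Finset (Fin n), (S.card : ℝ) * (wgt n S.card * f S) := by
    simp only [Finset.sum_filter]
    rw [Finset.sum_comm]
    refine Finset.sum_congr rfl fun S _ => ?_
    rw [Finset.sum_ite_mem, Finset.univ_inter, Finset.sum_const, nsmul_eq_mul]
  have hB : ∑ i : Fin n, ∑ S ∈ univ.filter (fun S : Finset (Fin n) => i ∈ S),
      wgt n S.card * f (S.erase i)
      = ∑ S : Finset (Fin n), ((n - S.card : ℕ) : ℝ) * (wgt n (S.card + 1) * f S) := by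
    have step : ∀ i : Fin n, ∑ S ∈ univ.filter (fun S : Finset (Fin n) => i ∈ S),
        wgt n S.card * f (S.erase i)
        = ∑ T ∈ univ.filter (fun T : Finset (Fin n) => i ∉ T),
            wgt n (T.card + 1) * f T := by
      intro i
      refine Finset.sum_nbij' (fun S => S.erase i) (fun T => insert i T) ?_ ?_ ?_ ?_ ?_
      · intro S hS; simp at hS ⊢
      · intro T hT; simp at hT ⊢
      · intro S hS; simp at hS; exact Finset.insert_erase hS
      · intro T hT; simp at hT; exact Finset.erase_insert hT
      · intro S hS; simp at hS
        rw [Finset.card_erase_of_mem hS]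
        have hc : S.card - 1 + 1 = S.card := by
          have := Finset.card_pos.mpr ⟨i, hS⟩; omega
        rw [hc]
    rw [Finset.sum_congr rfl (fun i _ => step i)]
    simp only [Finset.sum_filter]
    rw [Finset.sum_comm]
    refine Finset.sum_congr rfl fun S _ => ?_
    have : ∑ i : Fin n, (if i ∉ S then wgt n (S.card + 1) * f S else 0)
        = ∑ i ∈ Sᶜ, wgt n (S.card + 1) * f S := by
      rw [← Finset.sum_filter]
      congr 1
      ext i; simp
    rw [this, Finset.sum_const, nsmul_eq_mul, Finset.card_compl, Fintype.card_fin]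
  have expand : ∀ i : Fin n, ∀ S : Finset (Fin n),
      wgt n S.card * (f S - f (S.erase i)) = wgt n S.card * f S - wgt n S.card * f (S.erase i) :=
    fun i S => by ring
  simp only [expand, Finset.sum_sub_distrib]
  rw [hA, hB, ← Finset.sum_sub_distrib]
  have huniv : (Finset.univ : Finset (Fin n)) ≠ ∅ :=
    Finset.nonempty_iff_ne_empty.mp ⟨⟨0, hn⟩, Finset.mem_univ _⟩
  set g : Finset (Fin n) → ℝ := fun S =>
    (S.card : ℝ) * (wgt n S.card * f S) - ((n - S.card : ℕ) : ℝ) * (wgt n (S.card + 1) * f S)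
    with hg
  have hzero : ∀ S ∈ (Finset.univ : Finset (Finset (Fin n))),
      S ≠ Finset.univ ∧ S ≠ ∅ → g S = 0 := by
    rintro S _ ⟨hS1, hS2⟩
    have h1 : 0 < S.card := Finset.card_pos.mpr (Finset.nonempty_iff_ne_empty.mpr hS2)
    have h2 : S.card < n := by
      have := Finset.card_lt_card (Finset.ssubset_univ_iff.mpr hS1)
      simpa using this
    have hw := wgt_key n S.card h1 h2
    simp only [hg]
    linear_combination (f S) * hw
  have main := Finset.sum_eq_add (Finset.univ : Finset (Fin n)) (∅ : Finset (Fin n)) huniv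
    hzero (fun h => absurd (Finset.mem_univ _) h) (fun h => absurd (Finset.mem_univ _) h)
  rw [main]
  have c1 : (Finset.univ : Finset (Fin n)).card = n := by simp
  have c2 : (∅ : Finset (Fin n)).card = 0 := rfl
  have hfac : (n : ℝ) * (Nat.factorial (n - 1) : ℝ) = (Nat.factorial n : ℝ) := by
    rw [← Nat.cast_mul, Nat.mul_factorial_pred hn.ne']
  have hne : (Nat.factorial n : ℝ) ≠ 0 := by positivity
  have w1 : (n : ℝ) * wgt n n = 1 := by
    unfold wgt
    rw [Nat.sub_self, Nat.factorial_zero]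
    field_simp
    linear_combination hfac
  have w2 : ((n - 0 : ℕ) : ℝ) * wgt n (0 + 1) = 1 := by
    unfold wgt
    simp only [Nat.sub_zero, Nat.add_sub_cancel, Nat.factorial_zero]
    field_simp
    linear_combination hfac
  simp only [hg, c1, c2, Nat.sub_self, Nat.cast_zero]
  linear_combination (f Finset.univ) * w1 - (f ∅) * w2

theorem stmt6 {n j k : ℕ} [NeZero j] [NeZero k] (hj : 2 ≤ j) (hk : 2 ≤ k)
    (v : (Fin n → Fin j) → Fin k) (hv : IsJKGame v) :
    ∑ i : Fin n, Phi v i = 1 := by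
  obtain ⟨hv0, hv1, hvm⟩ := hv
  rcases Nat.eq_zero_or_pos n with hn | hn
  · exfalso
    subst hn
    have he : (fun _ : Fin 0 => (0 : Fin j)) = (fun _ : Fin 0 => topF j) := by
      funext i; exact i.elim0
    rw [he, hv1] at hv0
    have h := congrArg Fin.val hv0
    simp [topF] at h
    omega
  · have hC0 : Cfun v ∅ = 0 := by
      unfold Cfun
      have hm : ∀ (c : Fin j) (x : Fin n → Fin j), mer (∅ : Finset (Fin n)) c x = x := by
        intro c x; funext i; simp [mer]
      simp [hm]
    have hC1 : Cfun v Finset.univ = 1 := by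
      unfold Cfun
      have h1 : ∀ x : Fin n → Fin j, mer (Finset.univ : Finset (Fin n)) (topF j) x
          = fun _ => topF j := by intro x; funext i; simp [mer]
      have h2 : ∀ x : Fin n → Fin j, mer (Finset.univ : Finset (Fin n)) (0 : Fin j) x
          = fun _ => (0 : Fin j) := by intro x; funext i; simp [mer]
      simp only [h1, h2, hv0, hv1]
      rw [Finset.sum_const, Finset.card_univ]
      have hcard : Fintype.card (Fin n → Fin j) = j ^ n := by
        simp [Fintype.card_fun]
      rw [hcard]
      have htop : ((topF k).val : ℝ) = (k : ℝ) - 1 := by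
        show (((k - 1 : ℕ) : ℝ)) = (k : ℝ) - 1
        have : (1 : ℕ) ≤ k := by omega
        push_cast [this]
        ring
      have hz : ((0 : Fin k).val : ℝ) = 0 := by simp
      rw [htop, hz, sub_zero, nsmul_eq_mul]
      have hjne : ((j : ℝ) ^ n) ≠ 0 := by positivity
      have hkne : (k : ℝ) - 1 ≠ 0 := by
        have : (2 : ℝ) ≤ (k : ℝ) := by exact_mod_cast hk
        linarith
      push_cast
      field_simp
    have key := shapley_eff hn (Cfun v)
    unfold wgt at key
    unfold Phi
    rw [key, hC1, hC0, sub_zero]
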